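/- Let G be a connected claw-free graph of order n with γ_oir2(G) = n/2, and let f be any OI2RD function of G of weight n/2, with V_∅, V_{1}, V_{2}, V_{12} denoting the sets of vertices assigned ∅, {1}, {2}, {1,2} respectively. Then: (i) V_{12} = ∅; (ii) every vertex in V_∅ has exactly one neighbor in V_{1} and exactly one neighbor in V_{2}; (iii) every vertex in V_{1} ∪ V_{2} has exactly two neighbors in V_∅; and (iv) the subgraph of G induced by V_{1} ∪ V_{2} has maximum degree at most 2. -/

import Mathlib

/-- `f` is an outer-independent 2-rainbow dominating function of `G`. -/
def IsOI2RD {V : Type*} (G : SimpleGraph V) (f : V → Finset (Fin 2)) : Prop :=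
  (∀ v, f v = ∅ → ∀ c : Fin 2, ∃ u, G.Adj v u ∧ c ∈ f u) ∧
  (∀ u w, f u = ∅ → f w = ∅ → ¬ G.Adj u w)

/-- The outer-independent 2-rainbow domination number of `G`. -/
noncomputable def oir2 {V : Type*} [Fintype V] (G : SimpleGraph V) : ℕ :=
  sInf {w | ∃ f : V → Finset (Fin 2), IsOI2RD G f ∧ w = ∑ v, (f v).card}

/-- `G` is claw-free: it has no induced subgraph isomorphic to `K_{1,3}`. -/
def ClawFree {V : Type*} (G : SimpleGraph V) : Prop :=
  ¬ ∃ a b c d : V, b ≠ c ∧ b ≠ d ∧ c ≠ d ∧ G.Adj a b ∧ G.Adj a c ∧ G.Adj a d ∧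
      ¬ G.Adj b c ∧ ¬ G.Adj b d ∧ ¬ G.Adj c d

/-- Structure of minimum-weight OI2RD functions on connected claw-free graphs
attaining the bound `n/2`.  Here color `1` is represented by `0 : Fin 2` and
color `2` by `1 : Fin 2`, so `V_{1} = f⁻¹ {0}`, `V_{2} = f⁻¹ {1}` and
`V_{12} = f⁻¹ {0,1}`. -/
theorem structure_of_half_order_OI2RD
    {V : Type*} [Fintype V] (G : SimpleGraph V)
    (hconn : G.Connected) (hclaw : ClawFree G)
    (hG : (oir2 G : ℝ) = (Fintype.card V : ℝ) / 2)
    (f : V → Finset (Fin 2)) (hf : IsOI2RD G f)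
    (hw : ((∑ v, (f v).card : ℕ) : ℝ) = (Fintype.card V : ℝ) / 2) :
    -- (i) V_{12} = ∅
    (∀ v, f v ≠ ({0, 1} : Finset (Fin 2))) ∧
    -- (ii) every vertex of V_∅ has exactly one neighbor in V_{1} and exactly one in V_{2}
    (∀ v, f v = ∅ →
      (∃! u, G.Adj v u ∧ f u = ({0} : Finset (Fin 2))) ∧
      (∃! u, G.Adj v u ∧ f u = ({1} : Finset (Fin 2)))) ∧
    -- (iii) every vertex of V_{1} ∪ V_{2} has exactly two neighbors in V_∅
    (∀ v, (f v = ({0} : Finset (Fin 2)) ∨ f v = ({1} : Finset (Fin 2))) →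
      {u | G.Adj v u ∧ f u = ∅}.ncard = 2) ∧
    -- (iv) the subgraph induced by V_{1} ∪ V_{2} has maximum degree at most 2
    (∀ v, (f v = ({0} : Finset (Fin 2)) ∨ f v = ({1} : Finset (Fin 2))) →
      {u | G.Adj v u ∧ (f u = ({0} : Finset (Fin 2)) ∨ f u = ({1} : Finset (Fin 2)))}.ncard ≤ 2) := by
  classical
  obtain ⟨hdom, hind⟩ := hf
  have hcle : ∀ v, (f v).card ≤ 2 := fun v => by
    simpa using Finset.card_le_univ (f v)
  set A : Finset V := Finset.univ.filter (fun v => f v = ∅) with hA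
  have hmemA : ∀ v, v ∈ A ↔ f v = ∅ := fun v => by simp [hA]
  set N : V → Finset V := fun v => Finset.univ.filter (fun u => G.Adj v u) with hN
  have hmemN : ∀ v u, u ∈ N v ↔ G.Adj v u := fun v u => by simp [hN]
  -- claw-free: every vertex has at most 2 neighbors in `A`
  have hd2 : ∀ u : V, (A.filter (fun x => G.Adj u x)).card ≤ 2 := by
    intro u
    by_contra h
    push_neg at h
    obtain ⟨t, hts, ht3⟩ := Finset.exists_subset_card_eq (n := 3) h
    obtain ⟨a, b, c, hab, hac, hbc, rfl⟩ := Finset.card_eq_three.mp ht3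
    obtain ⟨haA, hua⟩ := Finset.mem_filter.mp (hts (show a ∈ ({a,b,c} : Finset V) by simp))
    obtain ⟨hbA, hub⟩ := Finset.mem_filter.mp (hts (show b ∈ ({a,b,c} : Finset V) by simp))
    obtain ⟨hcA, huc⟩ := Finset.mem_filter.mp (hts (show c ∈ ({a,b,c} : Finset V) by simp))
    exact hclaw ⟨u, a, b, c, hab, hac, hbc, hua, hub, huc,
      hind a b ((hmemA a).mp haA) ((hmemA b).mp hbA),
      hind a c ((hmemA a).mp haA) ((hmemA c).mp hcA),
      hind b c ((hmemA b).mp hbA) ((hmemA c).mp hcA)⟩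
  -- lower bound: every vertex of `A` sees total weight at least 2
  have hlow : ∀ v ∈ A, 2 ≤ ∑ u ∈ N v, (f u).card := by
    intro v hv
    have hfv := (hmemA v).mp hv
    obtain ⟨u0, hu0a, hu00⟩ := hdom v hfv 0
    obtain ⟨u1, hu1a, hu11⟩ := hdom v hfv 1
    by_cases h : u0 = u1
    · subst h
      have h2 : 2 ≤ (f u0).card := by
        have hsub : ({0, 1} : Finset (Fin 2)) ⊆ f u0 := by
          intro x hx
          simp only [Finset.mem_insert, Finset.mem_singleton] at hx
          rcases hx with rfl | rfl
          · exact hu00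
          · exact hu11
        have := Finset.card_le_card hsub
        simpa using this
      exact le_trans h2 (Finset.single_le_sum (f := fun u => (f u).card)
        (fun _ _ => Nat.zero_le _) ((hmemN v u0).mpr hu0a))
    · have hsub : ({u0, u1} : Finset V) ⊆ N v := by
        intro x hx
        simp only [Finset.mem_insert, Finset.mem_singleton] at hx
        rcases hx with rfl | rfl
        · exact (hmemN v x).mpr hu0a
        · exact (hmemN v x).mpr hu1a
      have hle : ∑ u ∈ ({u0, u1} : Finset V), (f u).card ≤ ∑ u ∈ N v, (f u).card :=
        Finset.sum_le_sum_of_subset hsub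
      rw [Finset.sum_pair h] at hle
      have h0 : 1 ≤ (f u0).card := Finset.card_pos.mpr ⟨0, hu00⟩
      have h1 : 1 ≤ (f u1).card := Finset.card_pos.mpr ⟨1, hu11⟩
      omega
  -- double counting
  have hswap : ∑ v ∈ A, ∑ u ∈ N v, (f u).card
      = ∑ u : V, (f u).card * (A.filter (fun x => G.Adj u x)).card := by
    calc ∑ v ∈ A, ∑ u ∈ N v, (f u).card
        = ∑ v ∈ A, ∑ u : V, if G.Adj v u then (f u).card else 0 := by
          refine Finset.sum_congr rfl fun v _ => ?_
          rw [hN]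
          exact Finset.sum_filter _ _
      _ = ∑ u : V, ∑ v ∈ A, if G.Adj v u then (f u).card else 0 := Finset.sum_comm
      _ = ∑ u : V, (f u).card * (A.filter (fun x => G.Adj u x)).card := by
          refine Finset.sum_congr rfl fun u _ => ?_
          have hfil : A.filter (fun v => G.Adj v u) = A.filter (fun x => G.Adj u x) :=
            Finset.filter_congr (fun x _ => ⟨fun h => G.adj_symm h, fun h => G.adj_symm h⟩)
          rw [← Finset.sum_filter, hfil, Finset.sum_const, smul_eq_mul, mul_comm]
  -- weight equation
  have hwn : (∑ v, (f v).card) * 2 = Fintype.card V := by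
    rw [eq_div_iff (by norm_num : (2:ℝ) ≠ 0)] at hw
    exact_mod_cast hw
  -- partition counting
  have hsumA : ∑ v ∈ A, (f v).card = 0 :=
    Finset.sum_eq_zero fun v hv => by rw [(hmemA v).mp hv]; rfl
  have hsplit : ∑ v ∈ Finset.univ \ A, (f v).card + ∑ v ∈ A, (f v).card
      = ∑ v, (f v).card := Finset.sum_sdiff (Finset.subset_univ A)
  have hAcge : (Finset.univ \ A).card ≤ ∑ v ∈ Finset.univ \ A, (f v).card := by
    have h := Finset.card_nsmul_le_sum (Finset.univ \ A) (fun v => (f v).card) 1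
      (fun v hv => by
        have hvA : v ∉ A := (Finset.mem_sdiff.mp hv).2
        have : f v ≠ ∅ := fun h => hvA ((hmemA v).mpr h)
        exact Finset.card_pos.mpr (Finset.nonempty_iff_ne_empty.mpr this))
    simpa using h
  have hcards : A.card + (Finset.univ \ A).card = Fintype.card V := by
    have h1 := Finset.card_sdiff_of_subset (Finset.subset_univ A)
    have h2 := Finset.card_le_univ A
    rw [Finset.card_univ] at h1
    omega
  have h2a_le : 2 * A.card ≤ ∑ v ∈ A, ∑ u ∈ N v, (f u).card := by
    have h := Finset.card_nsmul_le_sum A (fun v => ∑ u ∈ N v, (f u).card) 2 hlow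
    simpa [mul_comm] using h
  have hS_le : ∑ u : V, (f u).card * (A.filter (fun x => G.Adj u x)).card
      ≤ ∑ u : V, (f u).card * 2 :=
    Finset.sum_le_sum fun u _ => Nat.mul_le_mul_left _ (hd2 u)
  have hsum2 : ∑ u : V, (f u).card * 2 = (∑ v, (f v).card) * 2 := by
    rw [Finset.sum_mul]
  -- key equalities
  have hAw : A.card = ∑ v, (f v).card := by omega
  have hSeq : ∑ v ∈ A, ∑ u ∈ N v, (f u).card = 2 * A.card := by omega
  -- all labels are singletons or empty
  have hc1 : ∀ v, (f v).card ≤ 1 := by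
    intro v
    by_contra hcv
    push_neg at hcv
    have hvA : v ∈ Finset.univ \ A := by
      rw [Finset.mem_sdiff]
      refine ⟨Finset.mem_univ v, fun h => ?_⟩
      rw [(hmemA v).mp h] at hcv
      simp at hcv
    have hlt : ∑ x ∈ Finset.univ \ A, (1:ℕ) < ∑ x ∈ Finset.univ \ A, (f x).card :=
      Finset.sum_lt_sum (fun i hi => by
        have hiA : i ∉ A := (Finset.mem_sdiff.mp hi).2
        have : f i ≠ ∅ := fun h => hiA ((hmemA i).mpr h)
        exact Finset.card_pos.mpr (Finset.nonempty_iff_ne_empty.mpr this))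
        ⟨v, hvA, hcv⟩
    rw [Finset.sum_const, smul_eq_mul, mul_one] at hlt
    omega
  -- tightness at each vertex of A
  have hin : ∀ v ∈ A, ∑ u ∈ N v, (f u).card = 2 := by
    have hconst : ∑ _v ∈ A, (2:ℕ) = 2 * A.card := by
      rw [Finset.sum_const, smul_eq_mul, mul_comm]
    have h := (Finset.sum_eq_sum_iff_of_le (s := A) (f := fun _ => (2:ℕ))
      (g := fun v => ∑ u ∈ N v, (f u).card) hlow).mp (by rw [hconst]; omega)
    exact fun v hv => (h v hv).symm
  -- tightness for colored vertices
  have hdA : ∀ u, (f u).card = 1 → (A.filter (fun x => G.Adj u x)).card = 2 := by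
    have h := (Finset.sum_eq_sum_iff_of_le (s := (Finset.univ : Finset V))
      (f := fun u => (f u).card * (A.filter (fun x => G.Adj u x)).card)
      (g := fun u => (f u).card * 2)
      (fun u _ => Nat.mul_le_mul_left _ (hd2 u))).mp (by omega)
    intro u hu
    have := h u (Finset.mem_univ u)
    rw [hu, one_mul, one_mul] at this
    exact this
  -- any occupied label is a singleton
  have hsing : ∀ u, ∀ i : Fin 2, i ∈ f u → f u = {i} := by
    intro u i hi
    exact Finset.eq_singleton_iff_unique_mem.mpr
      ⟨hi, fun b hb => Finset.card_le_one.mp (hc1 u) b hb i hi⟩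
  have hne01 : ({0} : Finset (Fin 2)) ≠ {1} := by decide
  refine ⟨?_, ?_, ?_, ?_⟩
  · -- (i)
    intro v hv
    have h := hc1 v
    rw [hv] at h
    simp at h
  · -- (ii)
    intro v hfv
    have hvA : v ∈ A := (hmemA v).mpr hfv
    have hsum2v := hin v hvA
    obtain ⟨u0, hu0a, hu00⟩ := hdom v hfv 0
    obtain ⟨u1, hu1a, hu11⟩ := hdom v hfv 1
    have hf0 : f u0 = {0} := hsing u0 0 hu00
    have hf1 : f u1 = {1} := hsing u1 1 hu11
    have hne : u0 ≠ u1 := fun h => hne01 (by rw [← hf0, h, hf1])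
    have key : ∀ x y z : V, x ≠ y → x ≠ z → y ≠ z →
        G.Adj v x → G.Adj v y → G.Adj v z →
        f x ≠ ∅ → f y ≠ ∅ → f z ≠ ∅ → False := by
      intro x y z hxy hxz hyz hax hay haz hfx hfy hfz
      have hsub : ({x, y, z} : Finset V) ⊆ N v := by
        intro t ht
        simp only [Finset.mem_insert, Finset.mem_singleton] at ht
        rcases ht with rfl | rfl | rfl
        · exact (hmemN v t).mpr hax
        · exact (hmemN v t).mpr hay
        · exact (hmemN v t).mpr haz
      have hle : ∑ u ∈ ({x, y, z} : Finset V), (f u).card ≤ ∑ u ∈ N v, (f u).card :=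
        Finset.sum_le_sum_of_subset hsub
      rw [hsum2v, Finset.sum_insert (by simp [hxy, hxz]),
        Finset.sum_insert (by simp [hyz]), Finset.sum_singleton] at hle
      have h1 : 1 ≤ (f x).card := Finset.card_pos.mpr (Finset.nonempty_iff_ne_empty.mpr hfx)
      have h2 : 1 ≤ (f y).card := Finset.card_pos.mpr (Finset.nonempty_iff_ne_empty.mpr hfy)
      have h3 : 1 ≤ (f z).card := Finset.card_pos.mpr (Finset.nonempty_iff_ne_empty.mpr hfz)
      omega
    constructor
    · refine ⟨u0, ⟨hu0a, hf0⟩, ?_⟩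
      intro y hy
      obtain ⟨hya, hy0⟩ := hy
      by_contra hne'
      have hyu1 : y ≠ u1 := fun h => hne01 (by rw [← hy0, h, hf1])
      exact key y u0 u1 hne' hyu1 hne hya hu0a hu1a
        (by simp [hy0]) (by simp [hf0]) (by simp [hf1])
    · refine ⟨u1, ⟨hu1a, hf1⟩, ?_⟩
      intro y hy
      obtain ⟨hya, hy1⟩ := hy
      by_contra hne'
      have hyu0 : y ≠ u0 := fun h => hne01 (by rw [← hf0, ← h, hy1])
      exact key y u1 u0 hne' hyu0 (Ne.symm hne) hya hu1a hu0a
        (by simp [hy1]) (by simp [hf1]) (by simp [hf0])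
  · -- (iii)
    intro v hcv
    have hc : (f v).card = 1 := by rcases hcv with h | h <;> rw [h] <;> rfl
    have hd := hdA v hc
    have hset : {u | G.Adj v u ∧ f u = ∅} = ↑(A.filter (fun x => G.Adj v x)) := by
      ext u
      simp [hA, and_comm]
    rw [hset, Set.ncard_coe_finset]
    exact hd
  · -- (iv)
    intro v hcv
    have hc : (f v).card = 1 := by rcases hcv with h | h <;> rw [h] <;> rfl
    obtain ⟨a, b, hab, habeq⟩ := Finset.card_eq_two.mp (hdA v hc)
    have ha' : a ∈ A.filter (fun x => G.Adj v x) := by rw [habeq]; simp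
    have hb' : b ∈ A.filter (fun x => G.Adj v x) := by rw [habeq]; simp
    obtain ⟨haA, hva⟩ := Finset.mem_filter.mp ha'
    obtain ⟨hbA, hvb⟩ := Finset.mem_filter.mp hb'
    have hother : ∀ c : V, c ∈ A → G.Adj v c → ∃ c', ∀ x, G.Adj c x → x = v ∨ x = c' := by
      intro c hcA hvc
      have hfc : f c = ∅ := (hmemA c).mp hcA
      have hN1 : ∀ x ∈ N c, (f x).card = 1 := by
        intro x hx
        have hax : G.Adj c x := (hmemN c x).mp hx
        have hnex : f x ≠ ∅ := fun h => hind c x hfc h hax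
        have h1 := Finset.card_pos.mpr (Finset.nonempty_iff_ne_empty.mpr hnex)
        have h2 := hc1 x
        omega
      have hNcard : (N c).card = 2 := by
        have h := hin c hcA
        rw [Finset.sum_congr rfl hN1, Finset.sum_const, smul_eq_mul, mul_one] at h
        exact h
      obtain ⟨p, q, hpq, hNeq⟩ := Finset.card_eq_two.mp hNcard
      have hv : v ∈ ({p, q} : Finset V) := by
        rw [← hNeq]; exact (hmemN c v).mpr (G.adj_symm hvc)
      simp only [Finset.mem_insert, Finset.mem_singleton] at hv
      rcases hv with rfl | rfl
      · exact ⟨q, fun x hx => by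
          have hx' : x ∈ ({v, q} : Finset V) := by
            rw [← hNeq]; exact (hmemN c x).mpr hx
          simpa using hx'⟩
      · exact ⟨p, fun x hx => by
          have hx' : x ∈ ({p, v} : Finset V) := by
            rw [← hNeq]; exact (hmemN c x).mpr hx
          simpa [or_comm] using hx'⟩
    obtain ⟨a', ha'p⟩ := hother a haA hva
    obtain ⟨b', hb'p⟩ := hother b hbA hvb
    have hfa : f a = ∅ := (hmemA a).mp haA
    have hfb : f b = ∅ := (hmemA b).mp hbA
    have hsub : {u | G.Adj v u ∧ (f u = ({0} : Finset (Fin 2)) ∨ f u = ({1} : Finset (Fin 2)))}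
        ⊆ ({a', b'} : Set V) := by
      rintro x ⟨hvx, hfx⟩
      have hxa : x ≠ a := by
        rintro rfl; rw [hfa] at hfx
        rcases hfx with h | h <;> exact (Finset.singleton_ne_empty _) h.symm
      have hxb : x ≠ b := by
        rintro rfl; rw [hfb] at hfx
        rcases hfx with h | h <;> exact (Finset.singleton_ne_empty _) h.symm
      have hnadj : ¬ G.Adj a b := hind a b hfa hfb
      by_cases hax : G.Adj a x
      · rcases ha'p x hax with rfl | rfl
        · exact absurd hvx (G.irrefl)
        · exact Set.mem_insert _ _
      · by_cases hbx : G.Adj b x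
        · rcases hb'p x hbx with rfl | rfl
          · exact absurd hvx (G.irrefl)
          · exact Set.mem_insert_of_mem _ rfl
        · exact absurd ⟨v, a, b, x, hab, Ne.symm hxa, Ne.symm hxb, hva, hvb, hvx,
            hnadj, hax, hbx⟩ hclaw
    calc {u | G.Adj v u ∧ (f u = ({0} : Finset (Fin 2)) ∨ f u = ({1} : Finset (Fin 2)))}.ncard
        ≤ ({a', b'} : Set V).ncard :=
          Set.ncard_le_ncard hsub ((Set.finite_singleton b').insert a')
      _ ≤ 2 := by
          refine le_trans (Set.ncard_insert_le a' {b'}) ?_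
          simp [Set.ncard_singleton]
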